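/- Let k ≥ 3 and d > d_k. Then φ_{d,k} is a contraction on the interval [p*, 1]: there exists a constant c ∈ [0,1) such that |φ_{d,k}(x) − φ_{d,k}(y)| ≤ c·|x − y| for all x, y ∈ [p*, 1]. -/

import Mathlib

open Real Set Filter

/-- Upper tail of the Poisson distribution with mean `lam`:
`P[Po(lam) ≥ m] = ∑_{j ≥ m} e^{-lam} lam^j / j!`. -/
noncomputable def poTail (lam : ℝ) (m : ℕ) : ℝ :=
  ∑' j : ℕ, if m ≤ j then Real.exp (-lam) * lam ^ j / (j.factorial : ℝ) else 0

/-- `f_k(λ) = λ / P[Po(λ) ≥ k-1]`. -/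
noncomputable def fPW (k : ℕ) (lam : ℝ) : ℝ := lam / poTail lam (k - 1)

/-- `d_k = inf { f_k(λ) : λ > 0 }`. -/
noncomputable def dPW (k : ℕ) : ℝ := sInf (fPW k '' Set.Ioi (0 : ℝ))

/-- `φ_{d,k}(p) = P[Po(dp) ≥ k-1]`. -/
noncomputable def phiPW (d : ℝ) (k : ℕ) (p : ℝ) : ℝ := poTail (d * p) (k - 1)

namespace StmtAux

noncomputable def pterm (lam : ℝ) (j : ℕ) : ℝ :=
  Real.exp (-lam) * lam ^ j / (j.factorial : ℝ)

lemma tsum_pow_div_factorial (x : ℝ) :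
    ∑' n : ℕ, x ^ n / (n.factorial : ℝ) = Real.exp x := by
  rw [Real.exp_eq_exp_ℝ, NormedSpace.exp_eq_tsum_div]

lemma summable_pterm (lam : ℝ) : Summable (pterm lam) := by
  refine ((Real.summable_pow_div_factorial lam).mul_left (Real.exp (-lam))).congr fun j => ?_
  rw [pterm, mul_div_assoc]

lemma tsum_pterm (lam : ℝ) : ∑' j, pterm lam j = 1 := by
  have h : ∑' j, pterm lam j = Real.exp (-lam) * ∑' j : ℕ, lam ^ j / (j.factorial : ℝ) := by
    rw [← tsum_mul_left]
    exact tsum_congr fun j => by rw [pterm, mul_div_assoc]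
  rw [h, tsum_pow_div_factorial, ← Real.exp_add]
  simp

lemma summable_ite' (lam : ℝ) (m : ℕ) :
    Summable (fun j : ℕ => if j < m then pterm lam j else 0) := by
  apply summable_of_ne_finset_zero (s := Finset.range m)
  intro j hj
  rw [Finset.mem_range] at hj
  simp [hj]

lemma poTail_eq (lam : ℝ) (m : ℕ) :
    poTail lam m = 1 - ∑ j ∈ Finset.range m, pterm lam j := by
  have hsplit : ∀ j : ℕ, (if m ≤ j then Real.exp (-lam) * lam ^ j / (j.factorial : ℝ) else 0)
      = pterm lam j - (if j < m then pterm lam j else 0) := by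
    intro j
    by_cases h : m ≤ j
    · rw [if_pos h, if_neg (by omega), sub_zero]; rfl
    · rw [if_neg h, if_pos (by omega), sub_self]
  have hfin : ∑' j : ℕ, (if j < m then pterm lam j else 0)
      = ∑ j ∈ Finset.range m, pterm lam j := by
    rw [tsum_eq_sum (s := Finset.range m)
      (fun j hj => if_neg (by simpa [Finset.mem_range] using hj))]
    exact Finset.sum_congr rfl fun j hj => if_pos (Finset.mem_range.mp hj)
  rw [poTail]
  calc ∑' j : ℕ, (if m ≤ j then Real.exp (-lam) * lam ^ j / (j.factorial : ℝ) else 0)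
      = ∑' j : ℕ, (pterm lam j - (if j < m then pterm lam j else 0)) :=
        tsum_congr hsplit
    _ = (∑' j, pterm lam j) - ∑' j : ℕ, (if j < m then pterm lam j else 0) :=
        Summable.tsum_sub (summable_pterm lam) (summable_ite' lam m)
    _ = 1 - ∑ j ∈ Finset.range m, pterm lam j := by rw [tsum_pterm, hfin]

lemma summable_ite (lam : ℝ) (m : ℕ) :
    Summable (fun j : ℕ => if m ≤ j then pterm lam j else 0) := by
  have h := (summable_pterm lam).indicator {j : ℕ | m ≤ j}
  have he : (fun j : ℕ => if m ≤ j then pterm lam j else 0)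
      = ({j : ℕ | m ≤ j}).indicator (pterm lam) := by
    funext j
    simp [Set.indicator_apply, Set.mem_setOf_eq]
  rw [he]; exact h

lemma poTail_pos {lam : ℝ} (hlam : 0 < lam) (m : ℕ) : 0 < poTail lam m := by
  rw [poTail]
  refine Summable.tsum_pos (summable_ite lam m) (fun j => ?_) m (by simp [pterm]; positivity)
  by_cases h : m ≤ j
  · rw [if_pos h]; positivity
  · rw [if_neg h]

lemma poTail_nonneg {lam : ℝ} (hlam : 0 ≤ lam) (m : ℕ) : 0 ≤ poTail lam m := by
  rw [poTail]
  refine tsum_nonneg fun j => ?_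
  by_cases h : m ≤ j
  · rw [if_pos h]; positivity
  · rw [if_neg h]

lemma poTail_le_one {lam : ℝ} (hlam : 0 ≤ lam) (m : ℕ) : poTail lam m ≤ 1 := by
  rw [poTail_eq]
  have : 0 ≤ ∑ j ∈ Finset.range m, pterm lam j :=
    Finset.sum_nonneg fun j _ => by rw [pterm]; positivity
  linarith

lemma poTail_lt_one {lam : ℝ} (hlam : 0 < lam) {m : ℕ} (hm : 1 ≤ m) : poTail lam m < 1 := by
  rw [poTail_eq]
  have h0 : 0 < pterm lam 0 := by rw [pterm]; positivity
  have : 0 < ∑ j ∈ Finset.range m, pterm lam j := by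
    refine Finset.sum_pos' (fun j _ => by rw [pterm]; positivity) ⟨0, ?_, h0⟩
    simp [Finset.mem_range]; omega
  linarith

lemma poTail_zero {m : ℕ} (hm : 1 ≤ m) : poTail 0 m = 0 := by
  rw [poTail]
  have : ∀ j : ℕ, (if m ≤ j then Real.exp (-(0:ℝ)) * (0:ℝ) ^ j / (j.factorial : ℝ) else 0) = 0 := by
    intro j
    by_cases h : m ≤ j
    · rw [if_pos h, zero_pow (by omega : j ≠ 0)]; ring
    · rw [if_neg h]
  rw [tsum_congr this, tsum_zero]

noncomputable def Qp (m : ℕ) (x : ℝ) : ℝ := ∑ j ∈ Finset.range m, x ^ j / (j.factorial : ℝ)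

lemma hasDerivAt_Qp (m : ℕ) (x : ℝ) : HasDerivAt (Qp (m + 1)) (Qp m x) x := by
  induction m with
  | zero =>
    have h1 : Qp 1 = fun _ : ℝ => (1 : ℝ) := by
      funext y; simp [Qp]
    have h0 : Qp 0 x = 0 := by simp [Qp]
    rw [h1, h0]
    exact hasDerivAt_const x 1
  | succ m ih =>
    have h1 : Qp (m + 2) = fun y : ℝ => Qp (m + 1) y + y ^ (m + 1) / ((m + 1).factorial : ℝ) := by
      funext y; simp [Qp, Finset.sum_range_succ]
    have hfac : (((m + 1).factorial : ℝ)) = (m + 1) * (m.factorial : ℝ) := by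
      rw [Nat.factorial_succ]; push_cast; ring
    have h2 : HasDerivAt (fun y : ℝ => y ^ (m + 1) / ((m + 1).factorial : ℝ))
        (x ^ m / (m.factorial : ℝ)) x := by
      have h := (hasDerivAt_pow (m + 1) x).div_const ((m + 1).factorial : ℝ)
      refine h.congr_deriv ?_
      symm
      have hm : (m.factorial : ℝ) ≠ 0 := Nat.cast_ne_zero.mpr m.factorial_ne_zero
      rw [hfac, Nat.add_sub_cancel]
      field_simp
      push_cast
      ring
    have h3 := ih.add h2
    rw [h1]
    refine h3.congr_deriv ?_
    symm
    simp [Qp, Finset.sum_range_succ]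

lemma hasDerivAt_poTail (n : ℕ) (x : ℝ) :
    HasDerivAt (fun y => poTail y (n + 1)) (Real.exp (-x) * x ^ n / (n.factorial : ℝ)) x := by
  have hfun : (fun y => poTail y (n + 1)) = fun y => 1 - Real.exp (-y) * Qp (n + 1) y := by
    funext y
    rw [poTail_eq, Qp, Finset.mul_sum]
    congr 1
    exact Finset.sum_congr rfl fun j _ => by rw [pterm, mul_div_assoc]
  rw [hfun]
  have hexp : HasDerivAt (fun y : ℝ => Real.exp (-y)) (-Real.exp (-x)) x := by
    exact ((Real.hasDerivAt_exp (-x)).comp x (hasDerivAt_neg x)).congr_deriv (by ring)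
  have h := (hasDerivAt_const x (1 : ℝ)).sub (hexp.mul (hasDerivAt_Qp n x))
  refine h.congr_deriv ?_
  symm
  have hQ : Qp (n + 1) x - Qp n x = x ^ n / (n.factorial : ℝ) := by
    simp [Qp, Finset.sum_range_succ]
  rw [mul_div_assoc, ← hQ]
  ring

noncomputable def psiD (n : ℕ) (x : ℝ) : ℝ := Real.exp (-x) * x ^ n / (n.factorial : ℝ)

lemma hasDerivAt_psiD (n : ℕ) (x : ℝ) :
    HasDerivAt (psiD n)
      ((-Real.exp (-x) * x ^ n + Real.exp (-x) * ((n : ℝ) * x ^ (n - 1))) / (n.factorial : ℝ)) x := by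
  have hexp : HasDerivAt (fun y : ℝ => Real.exp (-y)) (-Real.exp (-x)) x := by
    exact ((Real.hasDerivAt_exp (-x)).comp x (hasDerivAt_neg x)).congr_deriv (by ring)
  exact (hexp.mul (hasDerivAt_pow n x)).div_const (n.factorial : ℝ)

noncomputable def gAux (n : ℕ) (x : ℝ) : ℝ := poTail x (n + 1) - x * psiD n x

lemma hasDerivAt_gAux {n : ℕ} (hn : 1 ≤ n) (x : ℝ) :
    HasDerivAt (gAux n) (Real.exp (-x) * x ^ n * (x - n) / (n.factorial : ℝ)) x := by
  have h := (hasDerivAt_poTail n x).sub ((hasDerivAt_id x).mul (hasDerivAt_psiD n x))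
  have hgA : gAux n = fun y => poTail y (n + 1) - id y * psiD n y := rfl
  rw [hgA]
  refine h.congr_deriv ?_
  symm
  have hx : x ^ n = x ^ (n - 1) * x := by
    rw [← pow_succ]
    congr 1
    omega
  rw [psiD, id_eq]
  field_simp
  rw [hx]
  ring

lemma gAux_zero (n : ℕ) : gAux n 0 = 0 := by
  simp [gAux, poTail_zero (by omega : 1 ≤ n + 1)]

lemma gAux_nonpos {n : ℕ} (hn : 1 ≤ n) {x : ℝ} (h0 : 0 ≤ x) (hxn : x ≤ (n : ℝ)) :
    gAux n x ≤ 0 := by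
  have hdiff : Differentiable ℝ (gAux n) := fun y => (hasDerivAt_gAux hn y).differentiableAt
  have hanti : AntitoneOn (gAux n) (Icc 0 (n : ℝ)) := by
    refine antitoneOn_of_deriv_nonpos (convex_Icc _ _) hdiff.continuous.continuousOn
      hdiff.differentiableOn ?_
    intro y hy
    rw [interior_Icc] at hy
    rw [(hasDerivAt_gAux hn y).deriv]
    apply div_nonpos_of_nonpos_of_nonneg _ (by positivity)
    have h1 : 0 ≤ Real.exp (-y) * y ^ n := by
      have := hy.1.le
      positivity
    nlinarith [hy.2]
  have h := hanti (Set.left_mem_Icc.mpr (by positivity)) ⟨h0, hxn⟩ h0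
  rw [gAux_zero] at h
  exact h

lemma gAux_mono {n : ℕ} (hn : 1 ≤ n) : MonotoneOn (gAux n) (Ici (n : ℝ)) := by
  have hdiff : Differentiable ℝ (gAux n) := fun y => (hasDerivAt_gAux hn y).differentiableAt
  refine monotoneOn_of_deriv_nonneg (convex_Ici _) hdiff.continuous.continuousOn
    hdiff.differentiableOn ?_
  intro y hy
  rw [interior_Ici] at hy
  have hn0 : (0 : ℝ) < (n : ℝ) := by exact_mod_cast Nat.pos_of_ne_zero (by omega)
  have hy0 : (0 : ℝ) < y := lt_trans hn0 hy
  rw [(hasDerivAt_gAux hn y).deriv]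
  apply div_nonneg _ (by positivity)
  have h1 : 0 ≤ Real.exp (-y) * y ^ n := by positivity
  nlinarith [(Set.mem_Ioi.mp hy).le]

lemma hasDerivAt_fPW (n : ℕ) {x : ℝ} (hx : 0 < x) :
    HasDerivAt (fun y => y / poTail y (n + 1))
      (gAux n x / (poTail x (n + 1)) ^ 2) x := by
  have h := (hasDerivAt_id x).div (hasDerivAt_poTail n x) (ne_of_gt (poTail_pos hx (n + 1)))
  refine h.congr_deriv ?_
  symm
  rw [gAux, psiD, id_eq, one_mul]

end StmtAux

open StmtAux in
theorem stmt_5 (k : ℕ) (hk : 3 ≤ k) (d : ℝ) (hd : dPW k < d)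
    (pstar : ℝ) (hp_mem : pstar ∈ Set.Icc (0 : ℝ) 1) (hp_fix : phiPW d k pstar = pstar)
    (hp_max : ∀ p ∈ Set.Icc (0 : ℝ) 1, phiPW d k p = p → p ≤ pstar) :
    ∃ c : ℝ, 0 ≤ c ∧ c < 1 ∧
      ∀ x ∈ Set.Icc pstar 1, ∀ y ∈ Set.Icc pstar 1,
        |phiPW d k x - phiPW d k y| ≤ c * |x - y| := by
  set n := k - 2 with hn
  have hn1 : 1 ≤ n := by omega
  have hkn : k - 1 = n + 1 := by omega
  -- d is positive
  have hne : (fPW k '' Set.Ioi (0 : ℝ)).Nonempty :=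
    ⟨fPW k 1, Set.mem_image_of_mem _ (by norm_num : (1 : ℝ) ∈ Set.Ioi (0 : ℝ))⟩
  have hd0 : 0 < d := by
    have h0le : 0 ≤ dPW k := by
      refine le_csInf hne ?_
      rintro b ⟨lam, hlam, rfl⟩
      exact div_nonneg (le_of_lt hlam) (poTail_nonneg (le_of_lt hlam) _)
    linarith
  -- rewriting phi
  have hphi_eq : phiPW d k = fun p => poTail (d * p) (n + 1) := by
    funext p; rw [phiPW, hkn]
  have hffun : fPW k = fun y => y / poTail y (n + 1) := by
    funext y; rw [fPW, hkn]
  -- derivative of phi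
  have hφderiv : ∀ p : ℝ, HasDerivAt (phiPW d k) (d * psiD n (d * p)) p := by
    intro p
    have h := (hasDerivAt_poTail n (d * p)).comp p ((hasDerivAt_id p).const_mul d)
    rw [hphi_eq]
    have h2 : HasDerivAt (fun p : ℝ => poTail (d * p) (n + 1))
        (Real.exp (-(d * p)) * (d * p) ^ n / (n.factorial : ℝ) * (d * 1)) p := h
    convert h2 using 1
    rw [psiD, mul_one]
    ring
  have hφdiff : Differentiable ℝ (phiPW d k) := fun p => (hφderiv p).differentiableAt
  have hφcont : Continuous (phiPW d k) := hφdiff.continuous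
  -- φ p < p for p ∈ (pstar, 1]
  have hφ1 : phiPW d k 1 < 1 := by
    rw [hphi_eq]
    simpa using poTail_lt_one (by simpa using hd0) (by omega : 1 ≤ n + 1)
  have hlt : ∀ p : ℝ, pstar < p → p ≤ 1 → phiPW d k p < p := by
    intro p hp1 hp2
    rcases lt_trichotomy (phiPW d k p) p with h | h | h
    · exact h
    · exact absurd (hp_max p ⟨le_trans hp_mem.1 hp1.le, hp2⟩ h) (not_le.mpr hp1)
    · exfalso
      set G := fun q => phiPW d k q - q with hG
      have hGcont : Continuous G := hφcont.sub continuous_id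
      have hmem : (0 : ℝ) ∈ Icc (G 1) (G p) := ⟨by simp [hG]; linarith, by simp [hG]; linarith⟩
      obtain ⟨z, hz, hGz⟩ := intermediate_value_Icc' hp2 hGcont.continuousOn hmem
      have hφz : phiPW d k z = z := by
        have : phiPW d k z - z = 0 := hGz
        linarith
      have hzle : z ≤ pstar :=
        hp_max z ⟨le_trans hp_mem.1 (le_trans hp1.le hz.1), hz.2⟩ hφz
      have : pstar < z := lt_of_lt_of_le hp1 hz.1
      linarith
  -- a point lam0 with fPW k lam0 < d
  obtain ⟨b, hbmem, hblt⟩ := exists_lt_of_csInf_lt hne hd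
  obtain ⟨lam0, hlam0pos, rfl⟩ := hbmem
  rw [Set.mem_Ioi] at hlam0pos
  -- p0 := lam0 / d satisfies φ p0 > p0
  set p0 := lam0 / d with hp0def
  have hp0pos : 0 < p0 := div_pos hlam0pos hd0
  have hdp0 : d * p0 = lam0 := by
    rw [hp0def, mul_comm, div_mul_cancel₀ lam0 (ne_of_gt hd0)]
  have hψ0pos : 0 < poTail lam0 (k - 1) := poTail_pos hlam0pos _
  have hφp0 : p0 < phiPW d k p0 := by
    have h1 : lam0 / poTail lam0 (k - 1) < d := hblt
    have h2 : lam0 < d * poTail lam0 (k - 1) := by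
      rw [div_lt_iff₀ hψ0pos] at h1
      linarith [h1]
    have : phiPW d k p0 = poTail lam0 (k - 1) := by rw [phiPW, hdp0]
    rw [this, hp0def, div_lt_iff₀ hd0]
    linarith
  -- p0 < pstar
  have hp0lt : p0 < pstar := by
    by_contra hcon
    push_neg at hcon
    rcases le_or_gt p0 1 with hp0le | hp0gt
    · rcases eq_or_lt_of_le hcon with heq | hlt'
      · rw [heq] at hp_fix; linarith [hφp0, hp_fix.le, hp_fix.ge]
      · linarith [hlt p0 hlt' hp0le]
    · have : phiPW d k p0 ≤ 1 := by
        rw [hphi_eq]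
        exact poTail_le_one (by positivity) _
      linarith
  have hpstar_pos : 0 < pstar := lt_trans hp0pos hp0lt
  -- lamstar
  set lamstar := d * pstar with hlamstar
  have hlamstar_pos : 0 < lamstar := by positivity
  have hlam0lt : lam0 < lamstar := by
    rw [← hdp0, hlamstar]
    exact mul_lt_mul_of_pos_left hp0lt hd0
  set F := fun y : ℝ => y / poTail y (n + 1) with hF
  have hFstar : F lamstar = d := by
    have hψstar : poTail lamstar (n + 1) = pstar := by
      have : phiPW d k pstar = poTail lamstar (n + 1) := by rw [phiPW, hkn]
      rw [← this, hp_fix]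
    rw [hF]
    simp only
    rw [hψstar, hlamstar, mul_div_assoc, div_self (ne_of_gt hpstar_pos), mul_one]
  have hF0 : F lam0 < d := by
    have : F lam0 = fPW k lam0 := by rw [hffun]
    rw [this]; exact hblt
  -- MVT for F on [lam0, lamstar]
  have hFcont : ContinuousOn F (Icc lam0 lamstar) := fun x hx =>
    ((hasDerivAt_fPW n (lt_of_lt_of_le hlam0pos hx.1)).continuousAt).continuousWithinAt
  obtain ⟨ξ, hξmem, hξeq⟩ := exists_hasDerivAt_eq_slope F
    (fun x => gAux n x / (poTail x (n + 1)) ^ 2) hlam0lt hFcont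
    (fun x hx => hasDerivAt_fPW n (lt_trans hlam0pos hx.1))
  have hξ0 : 0 < ξ := lt_trans hlam0pos hξmem.1
  have hψξ : 0 < poTail ξ (n + 1) := poTail_pos hξ0 _
  have hgξ : 0 < gAux n ξ := by
    have hslope : 0 < (F lamstar - F lam0) / (lamstar - lam0) :=
      div_pos (by rw [hFstar]; linarith) (by linarith [hξmem.1, hξmem.2])
    rw [← hξeq] at hslope
    have hψ2 : 0 < (poTail ξ (n + 1)) ^ 2 := by positivity
    have h := mul_pos hslope hψ2
    rwa [div_mul_cancel₀ _ (ne_of_gt hψ2)] at h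
  -- ξ > n, hence gAux positive on [lamstar, ∞)
  have hξn : (n : ℝ) ≤ ξ := by
    by_contra hcon
    push_neg at hcon
    linarith [gAux_nonpos hn1 hξ0.le hcon.le]
  have hg_pos : ∀ x : ℝ, lamstar ≤ x → 0 < gAux n x := by
    intro x hx
    have hξx : ξ ≤ x := le_trans hξmem.2.le hx
    exact lt_of_lt_of_le hgξ (gAux_mono hn1 hξn (le_trans hξn hξx) hξx)
  -- F is monotone on [lamstar, ∞)
  have hF_mono : MonotoneOn F (Ici lamstar) := by
    refine monotoneOn_of_deriv_nonneg (convex_Ici _) ?_ ?_ ?_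
    · exact fun x hx =>
        ((hasDerivAt_fPW n (lt_of_lt_of_le hlamstar_pos hx)).continuousAt).continuousWithinAt
    · intro x hx
      rw [interior_Ici] at hx
      exact ((hasDerivAt_fPW n (lt_trans hlamstar_pos hx)).differentiableAt).differentiableWithinAt
    · intro x hx
      rw [interior_Ici] at hx
      have hx0 : 0 < x := lt_trans hlamstar_pos hx
      rw [(hasDerivAt_fPW n hx0).deriv]
      exact div_nonneg (hg_pos x hx.le).le (by positivity)
  -- the key bound: d * psiD n (d * p) < 1 on [pstar, 1]
  have key : ∀ p ∈ Icc pstar 1, d * psiD n (d * p) < 1 := by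
    intro p hp
    set x := d * p with hxdef
    have hxs : lamstar ≤ x := by
      rw [hlamstar, hxdef]
      exact mul_le_mul_of_nonneg_left hp.1 hd0.le
    have hx0 : 0 < x := lt_of_lt_of_le hlamstar_pos hxs
    have hgx : 0 < gAux n x := hg_pos x hxs
    have h1 : x * psiD n x < poTail x (n + 1) := by
      rw [gAux] at hgx; linarith
    have hψx : 0 < poTail x (n + 1) := poTail_pos hx0 _
    have hfx : d ≤ F x := by
      rw [← hFstar]
      exact hF_mono (Set.self_mem_Ici) hxs hxs
    have h2 : d * poTail x (n + 1) ≤ x := by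
      rw [hF] at hfx
      simp only at hfx
      rw [le_div_iff₀ hψx] at hfx
      linarith
    have h3 : x * (d * psiD n x) < x * 1 := by
      calc x * (d * psiD n x) = d * (x * psiD n x) := by ring
        _ < d * poTail x (n + 1) := by exact mul_lt_mul_of_pos_left h1 hd0
        _ ≤ x := h2
        _ = x * 1 := (mul_one x).symm
    exact lt_of_mul_lt_mul_left h3 hx0.le
  -- the contraction constant
  have hcontD : Continuous fun p : ℝ => d * psiD n (d * p) := by
    simp only [psiD]
    fun_prop
  have hIccne : (Icc pstar 1).Nonempty := ⟨pstar, le_refl pstar, hp_mem.2⟩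
  obtain ⟨q, hqmem, hqmax⟩ := isCompact_Icc.exists_isMaxOn hIccne hcontD.continuousOn
  set c := d * psiD n (d * q) with hc
  have hnonneg : ∀ p ∈ Icc pstar 1, 0 ≤ d * psiD n (d * p) := by
    intro p hp
    have hp0 : 0 ≤ d * p := by
      have := le_trans hpstar_pos.le hp.1
      positivity
    rw [psiD]
    positivity
  have hc0 : 0 ≤ c := hnonneg q hqmem
  have hc1 : c < 1 := key q hqmem
  refine ⟨c, hc0, hc1, ?_⟩
  -- main Lipschitz estimate via MVT
  have main : ∀ a b : ℝ, a ∈ Icc pstar 1 → b ∈ Icc pstar 1 → a < b →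
      |phiPW d k b - phiPW d k a| ≤ c * (b - a) := by
    intro a b ha hb hab
    obtain ⟨ξ', hξ', heq⟩ := exists_hasDerivAt_eq_slope (phiPW d k)
      (fun p => d * psiD n (d * p)) hab hφcont.continuousOn (fun z _ => hφderiv z)
    have hξ'mem : ξ' ∈ Icc pstar 1 := ⟨le_trans ha.1 hξ'.1.le, le_trans hξ'.2.le hb.2⟩
    have h0 : 0 ≤ d * psiD n (d * ξ') := hnonneg ξ' hξ'mem
    have hle : d * psiD n (d * ξ') ≤ c := hqmax hξ'mem
    have hba : (0 : ℝ) < b - a := sub_pos.mpr hab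
    have hslope : phiPW d k b - phiPW d k a = (d * psiD n (d * ξ')) * (b - a) := by
      rw [heq, div_mul_cancel₀ _ (ne_of_gt hba)]
    rw [hslope, abs_mul, abs_of_nonneg h0, abs_of_nonneg hba.le]
    exact mul_le_mul_of_nonneg_right hle hba.le
  intro x hx y hy
  rcases lt_trichotomy x y with h | h | h
  · rw [abs_sub_comm, abs_sub_comm x y, abs_of_pos (sub_pos.mpr h)]
    exact main x y hx hy h
  · simp [h]
  · rw [abs_of_pos (sub_pos.mpr h)]
    exact main y x hy hx h
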